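/- arXiv:math/0305182 — 2 statements merged into one kernel-verified Lean document; each statement's English description precedes it below -/
import Mathlib

section
/- Let G be a group acting on an abelian group A, H ⊴ G a normal subgroup acting trivially on A, and f : H → A a surjective G-equivariant homomorphism. If A_{G/H} = 0 (the coinvariants of A under the induced G/H-action vanish) and ker f is perfect, then every element ξ ∈ H equals a product of commutators of elements of G, i.e., H ⊆ [G,G]. -/
open scoped commutatorElement

/-- Let `G` act on an abelian group `A`, `H ⊴ G` a normal subgroup acting trivially on
`A`, and `f : H → A` a surjective `G`-equivariant homomorphism. If the coinvariants of
`A` under the induced `G/H`-action vanish (equivalently, the subgroup of `A` generated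
by elements `g • a - a` is all of `A`), and `ker f` is perfect, then every element of
`H` is a product of commutators of elements of `G`, i.e. `H ⊆ [G,G]`. -/
theorem subgroup_le_commutator_of_coinvariants_vanish {G A : Type*} [Group G]
    [AddCommGroup A] [DistribMulAction G A] (H : Subgroup G) (hH : H.Normal)
    (htriv : ∀ h ∈ H, ∀ a : A, h • a = a)
    (f : H → A) (hfmul : ∀ x y : H, f (x * y) = f x + f y)
    (hfsurj : Function.Surjective f)
    (hequiv : ∀ (g : G) (h m : H), (m : G) = g * h * g⁻¹ → f m = g • f h)
    (hcoinv : AddSubgroup.closure {x : A | ∃ (g : G) (a : A), x = g • a - a} = ⊤)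
    (hker : ∀ h : H, f h = 0 → h ∈ Subgroup.closure
      {x : H | ∃ a b : H, f a = 0 ∧ f b = 0 ∧ x = ⁅a, b⁆}) :
    ∀ ξ ∈ H, ξ ∈ commutator G := by
  have hf1 : f 1 = 0 := by
    have h1 := hfmul 1 1
    rw [mul_one] at h1
    have : f 1 + f 1 = f 1 + 0 := by rw [add_zero]; exact h1.symm
    exact add_left_cancel this
  have hfinv : ∀ x : H, f x⁻¹ = -f x := by
    intro x
    have h1 := hfmul x x⁻¹
    rw [mul_inv_cancel, hf1] at h1
    exact eq_neg_of_add_eq_zero_right h1.symm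
  -- the additive subgroup of A consisting of images of elements of H lying in [G,G]
  set B : AddSubgroup A :=
    { carrier := f '' {m : H | (m : G) ∈ commutator G}
      add_mem' := by
        rintro x y ⟨m, hm, rfl⟩ ⟨n, hn, rfl⟩
        exact ⟨m * n, show ((m*n : H) : G) ∈ commutator G from mul_mem hm hn, (hfmul m n)⟩
      zero_mem' := ⟨1, show ((1 : H) : G) ∈ commutator G from one_mem _, hf1⟩
      neg_mem' := by
        rintro x ⟨m, hm, rfl⟩
        exact ⟨m⁻¹, show ((m⁻¹ : H) : G) ∈ commutator G from inv_mem hm, hfinv m⟩ } with hB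
  have hBtop : B = ⊤ := by
    rw [eq_top_iff, ← hcoinv]
    apply AddSubgroup.closure_le B |>.mpr
    rintro x ⟨g, a, rfl⟩
    obtain ⟨h, rfl⟩ := hfsurj a
    have hmem : g * (h : G) * g⁻¹ ∈ H := hH.conj_mem _ h.2 g
    set m : H := ⟨g * (h : G) * g⁻¹, hmem⟩ with hm
    have hfm : f m = g • f h := hequiv g h m rfl
    refine ⟨m * h⁻¹, ?_, ?_⟩
    · show ((m * h⁻¹ : H) : G) ∈ commutator G
      have : ((m * h⁻¹ : H) : G) = ⁅g, (h : G)⁆ := by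
        simp [hm, commutatorElement_def, mul_assoc]
      rw [this]
      exact Subgroup.commutator_mem_commutator (Subgroup.mem_top _) (Subgroup.mem_top _)
    · rw [hfmul, hfinv, hfm]
      abel
  intro ξ hξ
  set ξ' : H := ⟨ξ, hξ⟩ with hξ'
  have : f ξ' ∈ B := hBtop ▸ AddSubgroup.mem_top _
  obtain ⟨m, hm, hfm⟩ := this
  have hker' : f (ξ' * m⁻¹) = 0 := by rw [hfmul, hfinv, hfm]; abel
  have hmem := hker _ hker'
  have hle : Subgroup.closure {x : H | ∃ a b : H, f a = 0 ∧ f b = 0 ∧ x = ⁅a, b⁆}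
      ≤ (commutator G).comap H.subtype := by
    apply Subgroup.closure_le _ |>.mpr
    rintro x ⟨a, b, -, -, rfl⟩
    show ((⁅a, b⁆ : H) : G) ∈ commutator G
    have : ((⁅a, b⁆ : H) : G) = ⁅(a : G), (b : G)⁆ := by
      simp [commutatorElement_def]
    rw [this]
    exact Subgroup.commutator_mem_commutator (Subgroup.mem_top _) (Subgroup.mem_top _)
  have h1 : ((ξ' * m⁻¹ : H) : G) ∈ commutator G := hle hmem
  have h2 : ξ = ((ξ' * m⁻¹ : H) : G) * (m : G) := by
    simp [hξ', mul_assoc]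
  rw [h2]
  exact mul_mem h1 hm
end

section
/- Let G be a group with a surjective homomorphism Φ : G → H onto the Heisenberg group H = ℝ ×_c V (c nondegenerate alternating on V, dim V ≥ 2) such that ker Φ is perfect. Then the map G → V (composition of Φ with projection) induces an isomorphism H₁(G;ℤ) ≅ V. -/
/-- The Heisenberg multiplication on `ℝ × V` twisted by a form `c`. -/
def heisenbergMul {V : Type*} [AddCommGroup V] (c : V → V → ℝ) :
    (ℝ × V) → (ℝ × V) → (ℝ × V) :=
  fun x y => (x.1 + y.1 + c x.2 y.2, x.2 + y.2)

open scoped commutatorElement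

/-- Let `Φ : G → H = ℝ ×_c V` be a surjective homomorphism onto the Heisenberg group
over a symplectic `ℝ`-vector space `(V, c)` (`c` nondegenerate alternating bilinear,
`dim V ≥ 2`) with perfect kernel. Then the composition `q = pr_V ∘ Φ : G → V` induces
an isomorphism `H₁(G;ℤ) ≅ V`: `q` is a surjective homomorphism to the additive group
`V` whose kernel is exactly the commutator subgroup `[G,G]`. -/
theorem abelianization_iso_of_heisenberg_quotient {G V : Type*} [Group G]
    [AddCommGroup V] [Module ℝ V]
    (c : V → V → ℝ)
    (hadd_l : ∀ u u' v : V, c (u + u') v = c u v + c u' v)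
    (hadd_r : ∀ u v v' : V, c u (v + v') = c u v + c u v')
    (hsmul_l : ∀ (a : ℝ) (u v : V), c (a • u) v = a * c u v)
    (hsmul_r : ∀ (a : ℝ) (u v : V), c u (a • v) = a * c u v)
    (halt : ∀ v : V, c v v = 0)
    (hnondeg : ∀ u : V, (∀ v : V, c u v = 0) → u = 0)
    (hdim : 2 ≤ Module.rank ℝ V)
    (Φ : G → ℝ × V)
    (hΦmul : ∀ g h : G, Φ (g * h) = heisenbergMul c (Φ g) (Φ h))
    (hΦsurj : Function.Surjective Φ)
    (hker : ∀ g : G, Φ g = ((0 : ℝ), (0 : V)) → g ∈ Subgroup.closure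
      {x : G | ∃ a b : G, Φ a = ((0 : ℝ), (0 : V)) ∧ Φ b = ((0 : ℝ), (0 : V)) ∧
        x = ⁅a, b⁆}) :
    Function.Surjective (fun g : G => (Φ g).2) ∧
    (∀ g h : G, (Φ (g * h)).2 = (Φ g).2 + (Φ h).2) ∧
    (∀ g : G, (Φ g).2 = 0 ↔ g ∈ commutator G) := by
  -- basic component formulas
  have hq : ∀ g h : G, (Φ (g * h)).2 = (Φ g).2 + (Φ h).2 := by
    intro g h; rw [hΦmul]; rfl
  have hp : ∀ g h : G, (Φ (g * h)).1 = (Φ g).1 + (Φ h).1 + c (Φ g).2 (Φ h).2 := by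
    intro g h; rw [hΦmul]; rfl
  -- bilinearity consequences
  have hc0l : ∀ v : V, c 0 v = 0 := by
    intro v; have := hadd_l 0 0 v; simpa using this.symm
  have hc0r : ∀ v : V, c v 0 = 0 := by
    intro v; have := hadd_r v 0 0; simpa using this.symm
  have hcnegr : ∀ u v : V, c u (-v) = -c u v := by
    intro u v
    have := hadd_r u v (-v)
    rw [add_neg_cancel, hc0r] at this
    linarith
  have hcnegl : ∀ u v : V, c (-u) v = -c u v := by
    intro u v
    have := hadd_l u (-u) v
    rw [add_neg_cancel, hc0l] at this
    linarith
  have hanti : ∀ u v : V, c v u = -c u v := by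
    intro u v
    have h1 := halt (u + v)
    rw [hadd_l, hadd_r, hadd_r, halt, halt] at h1
    linarith
  -- values at 1 and inverses
  have hq1 : (Φ (1 : G)).2 = 0 := by
    have := hq 1 1
    rw [mul_one] at this
    exact (left_eq_add.mp this)
  have hp1 : (Φ (1 : G)).1 = 0 := by
    have := hp 1 1
    rw [mul_one, hq1, hc0l] at this
    linarith
  have hqinv : ∀ g : G, (Φ g⁻¹).2 = -(Φ g).2 := by
    intro g
    have := hq g g⁻¹
    rw [mul_inv_cancel, hq1] at this
    exact neg_eq_of_add_eq_zero_right this.symm |>.symm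
  have hpinv : ∀ g : G, (Φ g⁻¹).1 = -(Φ g).1 := by
    intro g
    have := hp g g⁻¹
    rw [mul_inv_cancel, hp1, hqinv, hcnegr, halt] at this
    linarith
  -- commutator values
  have hqcomm : ∀ a b : G, (Φ ⁅a, b⁆).2 = 0 := by
    intro a b
    show (Φ (a * b * a⁻¹ * b⁻¹)).2 = 0
    rw [hq, hq, hq, hqinv, hqinv]
    abel
  have hpcomm : ∀ a b : G, (Φ ⁅a, b⁆).1 = 2 * c (Φ a).2 (Φ b).2 := by
    intro a b
    show (Φ (a * b * a⁻¹ * b⁻¹)).1 = _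
    simp only [hp, hq, hpinv, hqinv]
    simp only [hadd_l, hadd_r, hcnegl, hcnegr, halt]
    linarith [hanti (Φ a).2 (Φ b).2]
  -- forward: commutator maps to 0
  have hforward : ∀ g : G, g ∈ commutator G → (Φ g).2 = 0 := by
    intro g hg
    let f : G →* Multiplicative V :=
      { toFun := fun g => Multiplicative.ofAdd (Φ g).2
        map_one' := by simpa using congrArg Multiplicative.ofAdd hq1
        map_mul' := fun g h => congrArg Multiplicative.ofAdd (hq g h) }
    have := Abelianization.commutator_subset_ker f hg
    simpa [f, MonoidHom.mem_ker] using this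
  refine ⟨?_, hq, ?_⟩
  · intro v
    obtain ⟨g, hg⟩ := hΦsurj (0, v)
    exact ⟨g, by simp [hg]⟩
  intro g
  constructor
  · -- reverse direction
    intro hg
    set t : ℝ := (Φ g).1 with ht
    -- find u v with 2 * c u v = t
    have hNT : Nontrivial V := by
      rw [← rank_pos_iff_nontrivial (R := ℝ)]
      exact lt_of_lt_of_le (by norm_num) hdim
    obtain ⟨u, hu⟩ := exists_ne (0 : V)
    have : ∃ w : V, c u w ≠ 0 := by
      by_contra h
      push_neg at h
      exact hu (hnondeg u h)
    obtain ⟨w, hw⟩ := this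
    set v : V := (t / (2 * c u w)) • w with hv
    have hcv : 2 * c u v = t := by
      rw [hv, hsmul_r]
      field_simp
    obtain ⟨a, ha⟩ := hΦsurj (0, u)
    obtain ⟨b, hb⟩ := hΦsurj (0, v)
    have hqa : (Φ a).2 = u := by rw [ha]
    have hqb : (Φ b).2 = v := by rw [hb]
    set h : G := ⁅a, b⁆ with hh
    have hcommem : h ∈ commutator G := by
      rw [commutator_eq_closure]
      exact Subgroup.subset_closure ⟨a, b, rfl⟩
    have hph : (Φ h).1 = t := by rw [hh, hpcomm, hqa, hqb, hcv]
    have hqh : (Φ h).2 = 0 := hqcomm a b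
    have hkermem : Φ (g * h⁻¹) = ((0 : ℝ), (0 : V)) := by
      have e1 : (Φ (g * h⁻¹)).1 = 0 := by
        rw [hp, hpinv, hph, hqinv, hqh, hg, hc0l]
        simp [ht]
      have e2 : (Φ (g * h⁻¹)).2 = 0 := by
        rw [hq, hqinv, hqh, hg]
        simp
      exact Prod.ext e1 e2
    have hclo := hker _ hkermem
    have hle : Subgroup.closure
        {x : G | ∃ a b : G, Φ a = ((0 : ℝ), (0 : V)) ∧ Φ b = ((0 : ℝ), (0 : V)) ∧
          x = ⁅a, b⁆} ≤ commutator G := by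
      rw [commutator_eq_closure]
      apply Subgroup.closure_mono
      rintro x ⟨a, b, -, -, rfl⟩
      exact ⟨a, b, rfl⟩
    have hmem : g * h⁻¹ ∈ commutator G := hle hclo
    have : g = (g * h⁻¹) * h := by group
    rw [this]
    exact mul_mem hmem hcommem
  · exact hforward g
end
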